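/- If B̃_{x₀} : X_T × Y → Y* is sequentially solutionally continuous in x₀ and y₀* (where X_T is X with some topology T), then the map x ↦ R̃(x₀, x) from X_T into Y is continuous at x₀. -/

import Mathlib

open Filter Topology

/-- If `B̃_{x₀} : X_T × Y → Y*` is sequentially solutionally continuous in `x₀`
and `y₀*` (`X_T` being `X` with an arbitrary topology `𝕋`), then
`x ↦ R̃(x₀, x)` from `X_T` into `Y` is (sequentially) continuous at `x₀`. -/
theorem solution_operator_continuous {X Y : Type*} [NormedAddCommGroup X] [NormedSpace ℝ X]
    [NormedAddCommGroup Y] [NormedSpace ℝ Y]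
    (𝕋 : TopologicalSpace X)
    (B : X → X → Y → (Y →L[ℝ] ℝ)) (y₀ : Y →L[ℝ] ℝ)
    (αB : ℝ) (hαB : 0 < αB)
    -- (A1.3) uniform strong monotonicity of `y ↦ B̃(x₁,x₂,y)`
    (hmono : ∀ (x₁ x₂ : X) (y₁ y₂ : Y),
      αB * ‖y₁ - y₂‖ ^ 2 ≤ (B x₁ x₂ y₁ - B x₁ x₂ y₂) (y₁ - y₂))
    -- (A1.3) radial continuity of `y ↦ B̃(x₁,x₂,y)`
    (hrad : ∀ (x₁ x₂ : X) (y v : Y),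
      ContinuousAt (fun t : ℝ => B x₁ x₂ (y + t • v) v) 0)
    -- `R̃(x₁,x₂)` is the solution of `B̃(x₁,x₂, ·) = y₀*`
    (R : X → X → Y) (hR : ∀ x₁ x₂ : X, B x₁ x₂ (R x₁ x₂) = y₀)
    (x₀ : X)
    -- sequential solutional continuity of `(x,y) ↦ B̃(x₀,x,y)` in `x₀` and `y₀*`:
    -- uniqueness of the solution of `B̃(x₀,x₀,·) = y₀*` ...
    (huniq : ∀ y : Y, B x₀ x₀ y = y₀ → y = R x₀ x₀)
    -- ... and convergence `B̃(x₀, x_n, y) → y₀*` for every `x_n → x₀` in `X_T`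
    (hssc : ∀ x : ℕ → X, Tendsto x atTop (@nhds X 𝕋 x₀) →
      Tendsto (fun n => B x₀ (x n) (R x₀ x₀)) atTop (𝓝 y₀)) :
    ∀ x : ℕ → X, Tendsto x atTop (@nhds X 𝕋 x₀) →
      Tendsto (fun n => R x₀ (x n)) atTop (𝓝 (R x₀ x₀)) := by
  intro x hx
  have herr : Tendsto (fun n => ‖B x₀ (x n) (R x₀ x₀) - y₀‖) atTop (𝓝 0) := by
    rw [← tendsto_iff_norm_sub_tendsto_zero]
    exact hssc x hx
  -- key estimate: αB * ‖R x₀ (x n) - R x₀ x₀‖ ≤ ‖B x₀ (x n) (R x₀ x₀) - y₀‖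
  have key : ∀ n, ‖R x₀ (x n) - R x₀ x₀‖ ≤ ‖B x₀ (x n) (R x₀ x₀) - y₀‖ / αB := by
    intro n
    set d := R x₀ (x n) - R x₀ x₀ with hd
    have h1 : αB * ‖d‖ ^ 2 ≤ (B x₀ (x n) (R x₀ (x n)) - B x₀ (x n) (R x₀ x₀)) d :=
      hmono x₀ (x n) _ _
    rw [hR x₀ (x n)] at h1
    have h2 : (y₀ - B x₀ (x n) (R x₀ x₀)) d ≤ ‖B x₀ (x n) (R x₀ x₀) - y₀‖ * ‖d‖ := by
      calc (y₀ - B x₀ (x n) (R x₀ x₀)) d ≤ ‖(y₀ - B x₀ (x n) (R x₀ x₀)) d‖ := le_abs_self _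
        _ ≤ ‖y₀ - B x₀ (x n) (R x₀ x₀)‖ * ‖d‖ := (y₀ - B x₀ (x n) (R x₀ x₀)).le_opNorm d
        _ = ‖B x₀ (x n) (R x₀ x₀) - y₀‖ * ‖d‖ := by rw [norm_sub_rev]
    have h3 : αB * ‖d‖ ^ 2 ≤ ‖B x₀ (x n) (R x₀ x₀) - y₀‖ * ‖d‖ := h1.trans h2
    rcases eq_or_lt_of_le (norm_nonneg d) with h0 | h0
    · rw [← h0]
      positivity
    · rw [div_eq_mul_inv, ← mul_le_mul_iff_of_pos_right h0]
      calc ‖d‖ * ‖d‖ = ‖d‖ ^ 2 := (sq ‖d‖).symm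
        _ ≤ αB⁻¹ * (αB * ‖d‖ ^ 2) := by
            rw [inv_mul_cancel_left₀ hαB.ne']
        _ ≤ αB⁻¹ * (‖B x₀ (x n) (R x₀ x₀) - y₀‖ * ‖d‖) := by
            exact mul_le_mul_of_nonneg_left h3 (by positivity)
        _ = ‖B x₀ (x n) (R x₀ x₀) - y₀‖ * αB⁻¹ * ‖d‖ := by ring
  rw [tendsto_iff_norm_sub_tendsto_zero]
  have hub : Tendsto (fun n => ‖B x₀ (x n) (R x₀ x₀) - y₀‖ / αB) atTop (𝓝 0) := by
    simpa using herr.div_const αB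
  exact squeeze_zero (fun n => norm_nonneg _) key hub
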